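/- Let c ≥ 1 and let E ⊆ ℂ satisfy: E is c-porous in ℂ, E + 1 = E (invariance under translation by 1), 0 ∈ E, and sup{ Im a : a ∈ E } = +∞. Let g : ℤ → ℂ be any map whose image is exactly E. Then sup_{m ∈ ℤ} |Im g(m) − Im g(m+1)| = +∞; that is, for every R > 0 there exists m ∈ ℤ with |Im g(m) − Im g(m+1)| ≥ R. -/

import Mathlib

/-- Lemma 4.2: if `E ⊆ ℂ` is `c`-porous, invariant under translation by 1, contains `0`,
and has imaginary parts unbounded above, then for any surjection `g : ℤ → ℂ` onto `E`,
the imaginary-part jumps between consecutive values of `g` are unbounded. -/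
theorem stmt_12 (c : ℝ) (hc : 1 ≤ c) (E : Set ℂ)
    (hpor : ∀ z' : ℂ, ∀ r : ℝ, 0 < r →
      ∃ z ∈ Metric.closedBall z' r, ∀ w ∈ Metric.ball z (r / c), w ∉ E)
    (hinv : ∀ z : ℂ, z + 1 ∈ E ↔ z ∈ E)
    (h0 : (0 : ℂ) ∈ E)
    (hsup : ∀ R : ℝ, ∃ a ∈ E, R < a.im)
    (g : ℤ → ℂ) (hg : Set.range g = E) :
    ∀ R : ℝ, 0 < R → ∃ m : ℤ, R ≤ |(g m).im - (g (m + 1)).im| := by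
  have hc0 : (0:ℝ) < c := lt_of_lt_of_le one_pos hc
  -- invariance under all integer translations
  have hinvZ : ∀ n : ℤ, ∀ v : ℂ, v + (n:ℂ) ∈ E ↔ v ∈ E := by
    intro n
    induction n using Int.induction_on with
    | zero => simp
    | succ k ih =>
        intro v
        have h1 : v + ((k:ℤ)+1 : ℤ) = (v + (k:ℤ)) + 1 := by push_cast; ring
        rw [h1, hinv]
        exact ih v
    | pred k ih =>
        intro v
        have h1 : v + ((-(k:ℤ)-1 : ℤ) : ℂ) + 1 = v + ((-(k:ℤ) : ℤ) : ℂ) := by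
          push_cast; ring
        rw [← hinv, h1]
        exact ih v
  intro R hR
  by_contra hcon
  push_neg at hcon
  set r := c * (R + 1) with hrdef
  have hrpos : 0 < r := by positivity
  have hrc : r / c = R + 1 := by field_simp [hrdef]; exact hrdef
  obtain ⟨z, hzmem, hzball⟩ := hpor ((r + R + 1) * Complex.I) r hrpos
  -- z has large imaginary part
  have hzim : R + 1 ≤ z.im := by
    have hd : dist z ((r + R + 1) * Complex.I) ≤ r := Metric.mem_closedBall.mp hzmem
    have him : |(z - (r + R + 1) * Complex.I).im| ≤ ‖z - (r + R + 1) * Complex.I‖ :=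
      Complex.abs_im_le_norm _
    rw [← Complex.dist_eq] at him
    have h2 : (z - (r + R + 1) * Complex.I).im = z.im - (r + R + 1) := by simp
    rw [h2] at him
    have := abs_le.mp (le_trans him hd)
    linarith [this.1]
  -- strip free of E: every point of E has |im - z.im| > R
  have hstrip : ∀ w ∈ E, R < |w.im - z.im| := by
    intro w hw
    by_contra hle
    push_neg at hle
    set n : ℤ := round (w.re - z.re) with hn
    have hwn : w - (n:ℂ) ∈ Metric.ball z (r / c) := by
      rw [Metric.mem_ball, Complex.dist_eq]
      have hre : |(w - (n:ℂ) - z).re| ≤ 1/2 := by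
        have : (w - (n:ℂ) - z).re = (w.re - z.re) - (n:ℝ) := by simp; ring
        rw [this, hn]
        exact abs_sub_round _
      have him : |(w - (n:ℂ) - z).im| ≤ R := by
        have : (w - (n:ℂ) - z).im = w.im - z.im := by simp
        rw [this]; exact hle
      calc ‖w - (n:ℂ) - z‖
          ≤ |(w - (n:ℂ) - z).re| + |(w - (n:ℂ) - z).im| := Complex.norm_le_abs_re_add_abs_im _
        _ ≤ 1/2 + R := by linarith
        _ < r / c := by rw [hrc]; linarith
    have hnotE : w - (n:ℂ) ∉ E := hzball _ hwn
    exact hnotE ((hinvZ n (w - (n:ℂ))).mp (by simpa using hw))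
  -- every g m is below or above the strip
  have hside : ∀ m : ℤ, (g m).im < z.im - R ∨ z.im + R < (g m).im := by
    intro m
    have hgm : g m ∈ E := hg ▸ Set.mem_range_self m
    have := hstrip _ hgm
    rcases lt_abs.mp this with h | h
    · right; linarith
    · left; linarith
  -- one-step sign preservation
  have step : ∀ m : ℤ, (g m).im < z.im - R → (g (m+1)).im < z.im - R := by
    intro m hm
    rcases hside (m+1) with h | h
    · exact h
    · exfalso
      have h2 : (g (m+1)).im - (g m).im ≤ |(g m).im - (g (m+1)).im| := by
        rw [abs_sub_comm]; exact le_abs_self _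
      linarith [hcon m]
  have step' : ∀ m : ℤ, (g (m+1)).im < z.im - R → (g m).im < z.im - R := by
    intro m hm
    rcases hside m with h | h
    · exact h
    · exfalso
      have h2 : (g m).im - (g (m+1)).im ≤ |(g m).im - (g (m+1)).im| := le_abs_self _
      linarith [hcon m]
  -- base point
  obtain ⟨m₀, hm₀⟩ : ∃ m₀, g m₀ = 0 := by
    have : (0:ℂ) ∈ Set.range g := hg ▸ h0
    exact this
  obtain ⟨a, haE, haim⟩ := hsup (z.im + R)
  obtain ⟨m₁, hm₁⟩ : ∃ m₁, g m₁ = a := by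
    have : a ∈ Set.range g := hg ▸ haE
    exact this
  -- induction: all below
  have hall : ∀ n : ℤ, (g (m₀ + n)).im < z.im - R := by
    intro n
    induction n using Int.induction_on with
    | zero => simp [hm₀]; linarith
    | succ k ih =>
        have h1 : m₀ + ((k:ℤ)+1) = (m₀ + k) + 1 := by ring
        rw [h1]
        exact step _ ih
    | pred k ih =>
        have h1 : m₀ + (-(k:ℤ)-1) + 1 = m₀ + (-(k:ℤ)) := by ring
        apply step' (m₀ + (-(k:ℤ)-1))
        rw [h1]
        exact ih
  have := hall (m₁ - m₀)
  rw [add_sub_cancel] at this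
  rw [hm₁] at this
  linarith
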